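/- arXiv:2505.12063 — 9 statements merged into one kernel-verified Lean document; each statement's English description precedes it below -/
import Mathlib

section
/- Let x' be an interior point of X and y₀ ≠ y₁ in Y. Define the c-affine functions f_i(x) = -c(x,y_i) + c(x',y_i) for i = 0,1. Then the section S(f₀; f₁) = {x ∈ X : f₀(x) ≤ f₁(x)} has nonempty interior. -/
open Set Function

noncomputable section

/-- Points of `ℝⁿ`. -/
abbrev Ept (n : ℕ) := EuclideanSpace ℝ (Fin n)

/-- `-D_x c(x,y)`, the negative gradient of `c` in the first variable. -/
def nDx {n : ℕ} (c : Ept n → Ept n → ℝ) (x y : Ept n) : Ept n :=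
  -gradient (fun x' => c x' y) x

/-- `-D_y c(x,y)`, the negative gradient of `c` in the second variable. -/
def nDy {n : ℕ} (c : Ept n → Ept n → ℝ) (x y : Ept n) : Ept n :=
  -gradient (fun y' => c x y') y

/-- The mixed Hessian `D²_{xy} c (x,y)` as an `n × n` matrix. -/
def mixedHessian {n : ℕ} (c : Ept n → Ept n → ℝ) (x y : Ept n) :
    Matrix (Fin n) (Fin n) ℝ := fun i j =>
  fderiv ℝ (fun x' => fderiv ℝ (fun y' => c x' y') y (EuclideanSpace.single j 1)) x
    (EuclideanSpace.single i 1)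

/-- Frobenius norm of a matrix. -/
def frobNorm {n : ℕ} (M : Matrix (Fin n) (Fin n) ℝ) : ℝ :=
  Real.sqrt (∑ i, ∑ j, (M i j) ^ 2)

/-- Standing assumptions on the spaces `X`, `Y` and the cost `c`: compactness, nonempty
interiors, `C²` regularity, bi-twist, non-degeneracy, and `c`-convexity of `X` and `Y`
with respect to each other. -/
structure CostSetup {n : ℕ} (X Y : Set (Ept n)) (c : Ept n → Ept n → ℝ) : Prop where
  compactX : IsCompact X
  compactY : IsCompact Y
  intX : (interior X).Nonempty
  intY : (interior Y).Nonempty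
  smooth : ContDiff ℝ 2 (Function.uncurry c)
  twist : ∀ x ∈ X, Set.InjOn (fun y => nDx c x y) Y
  twistStar : ∀ y ∈ Y, Set.InjOn (fun x => nDy c x y) X
  nondeg : ∀ x ∈ X, ∀ y ∈ Y, IsUnit (mixedHessian c x y)
  cConvX : ∀ y ∈ Y, Convex ℝ ((fun x => nDy c x y) '' X)
  cConvY : ∀ x ∈ X, Convex ℝ ((fun y => nDx c x y) '' Y)

/-- Loeper's property. -/
def Loeper {n : ℕ} (X Y : Set (Ept n)) (c : Ept n → Ept n → ℝ) : Prop :=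
  ∀ x₀ ∈ X, ∀ x₁ ∈ X, ∀ y₀ ∈ Y, ∀ y ∈ Y, ∀ xt ∈ X, ∀ t ∈ Icc (0:ℝ) 1,
    nDy c xt y₀ = t • nDy c x₁ y₀ + (1 - t) • nDy c x₀ y₀ →
    -c xt y + c xt y₀ ≤ max (-c x₀ y + c x₀ y₀) (-c x₁ y + c x₁ y₀)

/-- The `c`-chord between `(x₀,u₀)` and `(x₁,u₁)`, evaluated at `x`. -/
def cChord {n : ℕ} (Y : Set (Ept n)) (c : Ept n → Ept n → ℝ)
    (x₀ x₁ : Ept n) (u₀ u₁ : ℝ) (x : Ept n) : ℝ :=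
  sSup {v : ℝ | ∃ y ∈ Y, ∃ h : ℝ, -c x₀ y + h ≤ u₀ ∧ -c x₁ y + h ≤ u₁ ∧ v = -c x y + h}

/-- Alternative `c`-convexity. -/
def AltCConvex {n : ℕ} (X Y : Set (Ept n)) (c : Ept n → Ept n → ℝ) (φ : Ept n → ℝ) : Prop :=
  ∀ x₀ ∈ X, ∀ x₁ ∈ X, ∀ x ∈ X, φ x ≤ cChord Y c x₀ x₁ (φ x₀) (φ x₁) x

/-- `c`-convexity: `φ` is a supremum of `c`-affine functions. -/
def CConvex {n : ℕ} (X Y : Set (Ept n)) (c : Ept n → Ept n → ℝ) (φ : Ept n → ℝ) : Prop :=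
  ∃ ψ : Ept n → EReal, (∃ y ∈ Y, ψ y ≠ ⊥) ∧ (∀ y, ψ y ≠ ⊤) ∧
    ∀ x ∈ X, (φ x : EReal) = ⨆ y ∈ Y, (((-c x y : ℝ) : EReal) + ψ y)

/-- the section of one `c`-affine function with respect to another has
nonempty interior, when both pass through an interior point `x'`. -/
theorem stmt_1 {n : ℕ} (X Y : Set (Ept n)) (c : Ept n → Ept n → ℝ)
    (hsetup : CostSetup X Y c)
    (x' : Ept n) (hx' : x' ∈ interior X)
    (y₀ : Ept n) (hy₀ : y₀ ∈ Y) (y₁ : Ept n) (hy₁ : y₁ ∈ Y) (hne : y₀ ≠ y₁) :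
    (interior {x ∈ X | -c x y₀ + c x' y₀ ≤ -c x y₁ + c x' y₁}).Nonempty := by
  have hx'X : x' ∈ X := interior_subset hx'
  have hdiff : ∀ y : Ept n, Differentiable ℝ (fun x => c x y) := fun y =>
    (hsetup.smooth.comp (contDiff_id.prodMk contDiff_const)).differentiable (by norm_num)
  set F : Ept n → ℝ := fun x => c x y₀ - c x y₁ - c x' y₀ + c x' y₁ with hFdef
  set g₀ := gradient (fun x => c x y₀) x' with hg₀def
  set g₁ := gradient (fun x => c x y₁) x' with hg₁def
  set v := g₀ - g₁ with hvdef
  have hv : v ≠ 0 := by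
    intro h
    apply hne
    apply hsetup.twist x' hx'X hy₀ hy₁
    have hgg : g₀ = g₁ := by rwa [hvdef, sub_eq_zero] at h
    simp only [nDx, hg₀def, hg₁def] at hgg ⊢
    rw [hgg]
  have hL : (0:ℝ) < ‖v‖ ^ 2 := pow_pos (norm_pos_iff.mpr hv) 2
  have hF0 : HasFDerivAt (fun x => c x y₀) (InnerProductSpace.toDual ℝ (Ept n) g₀) x' :=
    ((hdiff y₀ x').hasGradientAt).hasFDerivAt
  have hF1 : HasFDerivAt (fun x => c x y₁) (InnerProductSpace.toDual ℝ (Ept n) g₁) x' :=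
    ((hdiff y₁ x').hasGradientAt).hasFDerivAt
  have hFderiv : HasFDerivAt F (InnerProductSpace.toDual ℝ (Ept n) v) x' := by
    have hadd : HasFDerivAt (fun x => c x y₀ - c x y₁ + (-c x' y₀ + c x' y₁)) _ x' :=
      (hF0.sub hF1).add_const (-c x' y₀ + c x' y₁)
    have heq : (fun x => c x y₀ - c x y₁ + (-c x' y₀ + c x' y₁)) = F := by
      funext x; simp only [hFdef]; ring
    rw [heq] at hadd
    rwa [hvdef, map_sub]
  set γ : ℝ → Ept n := fun t => x' + t • v with hγdef
  have hγderiv : HasDerivAt γ v 0 := by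
    have h1 : HasDerivAt (fun t : ℝ => t • v) ((1:ℝ) • v) 0 := (hasDerivAt_id 0).smul_const v
    simpa [hγdef] using h1.const_add x'
  have hγ0 : γ 0 = x' := by simp [hγdef]
  set h : ℝ → ℝ := F ∘ γ with hhdef
  have hh0 : h 0 = 0 := by simp [hhdef, hγ0, hFdef]
  have hhderiv : HasDerivAt h (‖v‖ ^ 2) 0 := by
    have hF' : HasFDerivAt F (InnerProductSpace.toDual ℝ (Ept n) v) (γ 0) := hγ0.symm ▸ hFderiv
    have hcomp := hF'.comp_hasDerivAt 0 hγderiv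
    have hval : (InnerProductSpace.toDual ℝ (Ept n) v) v = ‖v‖ ^ 2 := by
      rw [InnerProductSpace.toDual_apply_apply, real_inner_self_eq_norm_sq]
    rw [hhdef, ← hval]
    exact hcomp
  have hslope : Filter.Tendsto (slope h 0) (nhdsWithin 0 {x | x ≠ 0}) (nhds (‖v‖ ^ 2)) :=
    hasDerivAt_iff_tendsto_slope.mp hhderiv
  have h1 : ∀ᶠ t in nhdsWithin (0:ℝ) (Set.Ioi 0), 0 < slope h 0 t := by
    have hev : ∀ᶠ t in nhdsWithin (0:ℝ) {x | x ≠ 0}, 0 < slope h 0 t :=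
      hslope.eventually (eventually_gt_nhds hL)
    exact hev.filter_mono (nhdsWithin_mono 0 (fun t ht => ne_of_gt ht))
  have hγcont : Continuous γ := continuous_const.add (continuous_id.smul continuous_const)
  have h2 : ∀ᶠ t in nhdsWithin (0:ℝ) (Set.Ioi 0), γ t ∈ interior X := by
    have hev : ∀ᶠ t in nhds (0:ℝ), γ t ∈ interior X :=
      hγcont.continuousAt.eventually_mem (hγ0 ▸ isOpen_interior.mem_nhds hx')
    exact hev.filter_mono nhdsWithin_le_nhds
  have h3 : ∀ᶠ t in nhdsWithin (0:ℝ) (Set.Ioi 0), (0:ℝ) < t := self_mem_nhdsWithin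
  obtain ⟨t, hslopet, htmem, htpos⟩ := (h1.and (h2.and h3)).exists
  have hFt : 0 < F (γ t) := by
    have hst : slope h 0 t = h t / t := by simp [slope, hh0, div_eq_inv_mul]
    rw [hst] at hslopet
    have : 0 < h t := by
      by_contra hc
      push_neg at hc
      have : h t / t ≤ 0 := div_nonpos_of_nonpos_of_nonneg hc (le_of_lt htpos)
      linarith
    simpa [hhdef] using this
  have hFcont : Continuous F := by
    exact (((hdiff y₀).continuous.sub (hdiff y₁).continuous).sub continuous_const).add
      continuous_const
  set U := interior X ∩ F ⁻¹' (Set.Ioi 0) with hUdef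
  have hUopen : IsOpen U := isOpen_interior.inter (isOpen_Ioi.preimage hFcont)
  have hUsub : U ⊆ {x ∈ X | -c x y₀ + c x' y₀ ≤ -c x y₁ + c x' y₁} := by
    rintro x ⟨hxi, hxF⟩
    refine ⟨interior_subset hxi, ?_⟩
    simp only [hFdef, Set.mem_preimage, Set.mem_Ioi] at hxF
    linarith
  exact ⟨γ t, interior_maximal hUsub hUopen ⟨htmem, hFt⟩⟩
end
end

section
/- Let x' ∈ X, y₀, y₁ ∈ Y with y₀ ≠ y₁, and f_i(x) = -c(x,y_i) + c(x',y_i) for i = 0,1. If f₀(x₀) = f₁(x₀) for some x₀ ∈ X, then x₀ lies on the boundary of the section S(f₀; f₁) = {x ∈ X : f₀(x) ≤ f₁(x)}. Consequently, the interior of S(f₀; f₁) is contained in {x ∈ X : f₀(x) < f₁(x)}, and {x ∈ X : f₀(x) = f₁(x)} ⊂ ∂S(f₀; f₁). -/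
open Set Function

noncomputable section

/-- equality points of two `c`-affine functions lie on the boundary of the
section; consequently the interior of the section is where the strict inequality holds. -/
theorem stmt_2 {n : ℕ} (X Y : Set (Ept n)) (c : Ept n → Ept n → ℝ)
    (hsetup : CostSetup X Y c)
    (x' : Ept n) (hx' : x' ∈ X)
    (y₀ : Ept n) (hy₀ : y₀ ∈ Y) (y₁ : Ept n) (hy₁ : y₁ ∈ Y) (hne : y₀ ≠ y₁) :
    (∀ x₀ ∈ X, -c x₀ y₀ + c x' y₀ = -c x₀ y₁ + c x' y₁ →
      x₀ ∈ frontier {x ∈ X | -c x y₀ + c x' y₀ ≤ -c x y₁ + c x' y₁}) ∧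
    interior {x ∈ X | -c x y₀ + c x' y₀ ≤ -c x y₁ + c x' y₁} ⊆
      {x ∈ X | -c x y₀ + c x' y₀ < -c x y₁ + c x' y₁} ∧
    {x ∈ X | -c x y₀ + c x' y₀ = -c x y₁ + c x' y₁} ⊆
      frontier {x ∈ X | -c x y₀ + c x' y₀ ≤ -c x y₁ + c x' y₁} := by
  set S := {x ∈ X | -c x y₀ + c x' y₀ ≤ -c x y₁ + c x' y₁} with hS
  have key : ∀ x₀ ∈ X, -c x₀ y₀ + c x' y₀ = -c x₀ y₁ + c x' y₁ → x₀ ∈ frontier S := by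
    intro x₀ hx₀ heq
    -- differentiability of x ↦ c x y
    have hcd : ∀ y : Ept n, Differentiable ℝ (fun x => c x y) := by
      intro y
      have : ContDiff ℝ 2 (fun x => c x y) :=
        hsetup.smooth.comp (contDiff_id.prodMk contDiff_const)
      exact this.differentiable (by norm_num)
    set L₀ := fderiv ℝ (fun x => c x y₀) x₀ with hL₀
    set L₁ := fderiv ℝ (fun x => c x y₁) x₀ with hL₁
    have hLne : L₀ ≠ L₁ := by
      intro h
      have hgrad : gradient (fun x => c x y₀) x₀ = gradient (fun x => c x y₁) x₀ := by
        unfold gradient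
        rw [← hL₀, ← hL₁, h]
      have : nDx c x₀ y₀ = nDx c x₀ y₁ := by
        unfold nDx; rw [hgrad]
      exact hne (hsetup.twist x₀ hx₀ hy₀ hy₁ this)
    set L : Ept n →L[ℝ] ℝ := L₀ - L₁ with hLdef
    have hLne0 : L ≠ 0 := sub_ne_zero.mpr hLne
    obtain ⟨w, hw⟩ : ∃ w, L w ≠ 0 := by
      by_contra h
      push_neg at h
      exact hLne0 (ContinuousLinearMap.ext fun w => by simp [h w])
    obtain ⟨v, hv⟩ : ∃ v, L v < 0 := by
      rcases lt_or_gt_of_ne hw with h | h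
      · exact ⟨w, h⟩
      · exact ⟨-w, by simpa using neg_neg_iff_pos.mpr h⟩
    -- g x = f₁ x - f₀ x, so S ∩ ... means g ≥ 0
    set g : Ept n → ℝ := fun x => (-c x y₁ + c x' y₁) - (-c x y₀ + c x' y₀) with hg
    have hgx₀ : g x₀ = 0 := by simp [hg, heq]
    have hgderiv : HasFDerivAt g L x₀ := by
      have h₀ : HasFDerivAt (fun x => c x y₀) L₀ x₀ := (hcd y₀ x₀).hasFDerivAt
      have h₁ : HasFDerivAt (fun x => c x y₁) L₁ x₀ := (hcd y₁ x₀).hasFDerivAt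
      have h₁' : HasFDerivAt (fun x => -c x y₁ + c x' y₁) (-L₁) x₀ :=
        h₁.neg.add_const _
      have h₀' : HasFDerivAt (fun x => -c x y₀ + c x' y₀) (-L₀) x₀ :=
        h₀.neg.add_const _
      have := h₁'.sub h₀'
      have e : L = -L₁ - -L₀ := by rw [hLdef]; abel
      rw [e]
      exact this
    -- the line t ↦ x₀ + t • v
    set line : ℝ → Ept n := fun t => x₀ + t • v with hline
    have hlineDeriv : HasDerivAt line v 0 := by
      simpa [hline] using ((hasDerivAt_id (0 : ℝ)).smul_const v).const_add x₀
    set h : ℝ → ℝ := fun t => g (line t) with hh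
    have hline0 : line 0 = x₀ := by simp [hline]
    have hhDeriv : HasDerivAt h (L v) 0 := by
      have hgderiv' : HasFDerivAt g L (line 0) := hline0 ▸ hgderiv
      have := hgderiv'.comp_hasDerivAt (0:ℝ) hlineDeriv
      exact this
    have hh0 : h 0 = 0 := by simp [hh, hline0, hgx₀]
    -- slope tends to L v < 0
    have hslope : Filter.Tendsto (slope h 0) (nhdsWithin 0 {(0:ℝ)}ᶜ) (nhds (L v)) :=
      hasDerivAt_iff_tendsto_slope.mp hhDeriv
    have hslope' : ∀ᶠ t in nhdsWithin (0:ℝ) (Set.Ioi 0), slope h 0 t < 0 := by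
      have : ∀ᶠ t in nhdsWithin (0:ℝ) {(0:ℝ)}ᶜ, slope h 0 t < 0 :=
        hslope.eventually (Filter.Tendsto.eventually_lt_const hv Filter.tendsto_id)
      exact this.filter_mono (nhdsWithin_mono _ (fun t ht => ne_of_gt ht))
    have hhneg : ∀ᶠ t in nhdsWithin (0:ℝ) (Set.Ioi 0), h t < 0 := by
      filter_upwards [hslope', self_mem_nhdsWithin] with t hst ht
      have htpos : (0:ℝ) < t := ht
      have hslope_eq : slope h 0 t = h t / t := by
        simp [slope, hh0]
        ring
      rw [hslope_eq] at hst
      by_contra hcon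
      push_neg at hcon
      have : (0:ℝ) ≤ h t / t := div_nonneg hcon htpos.le
      linarith
    -- x₀ ∈ closure S
    have hx₀S : x₀ ∈ S := ⟨hx₀, le_of_eq heq⟩
    have hclS : x₀ ∈ closure S := subset_closure hx₀S
    -- x₀ ∈ closure Sᶜ
    have hclSc : x₀ ∈ closure Sᶜ := by
      rw [mem_closure_iff_nhds]
      intro U hU
      have hlineTendsto : Filter.Tendsto line (nhdsWithin (0:ℝ) (Set.Ioi 0)) (nhds x₀) := by
        have : Filter.Tendsto line (nhds 0) (nhds x₀) := by
          rw [← hline0]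
          exact (hlineDeriv.continuousAt).tendsto
        exact this.mono_left nhdsWithin_le_nhds
      have hU' : ∀ᶠ t in nhdsWithin (0:ℝ) (Set.Ioi 0), line t ∈ U := hlineTendsto hU
      have : ∀ᶠ t in nhdsWithin (0:ℝ) (Set.Ioi 0), line t ∈ U ∧ h t < 0 :=
        hU'.and hhneg
      obtain ⟨t, htU, hth⟩ := this.exists
      refine ⟨line t, htU, ?_⟩
      intro hmem
      have : (0:ℝ) ≤ g (line t) := sub_nonneg.mpr hmem.2
      exact absurd hth (not_lt.mpr this)
    rw [frontier_eq_closure_inter_closure]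
    exact ⟨hclS, hclSc⟩
  refine ⟨key, ?_, ?_⟩
  · intro x hx
    have hxS : x ∈ S := interior_subset hx
    refine ⟨hxS.1, ?_⟩
    rcases lt_or_eq_of_le hxS.2 with h | h
    · exact h
    · exfalso
      have hfr := key x hxS.1 h
      rw [frontier_eq_closure_inter_closure] at hfr
      have : x ∈ closure Sᶜ := hfr.2
      rw [closure_compl] at this
      exact this hx
  · intro x hx
    exact key x hx.1 hx.2
end
end

section
/- Let φ : X → ℝ be a c-convex function with X, Y compact and c continuous. Then for every x₀ ∈ X there exists y₀ ∈ Y which is a c-subdifferential of φ at x₀, i.e. -c(x,y₀) + c(x₀,y₀) + φ(x₀) ≤ φ(x) for all x ∈ X. -/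
open Set Function

noncomputable section

/-- every `c`-convex function admits a `c`-subdifferential at every point. -/
theorem stmt_4 {n : ℕ} (X Y : Set (Ept n)) (c : Ept n → Ept n → ℝ)
    (hX : IsCompact X) (hY : IsCompact Y)
    (hc : ContinuousOn (Function.uncurry c) (X ×ˢ Y))
    (φ : Ept n → ℝ) (hφ : CConvex X Y c φ)
    (x₀ : Ept n) (hx₀ : x₀ ∈ X) :
    ∃ y₀ ∈ Y, ∀ x ∈ X, -c x y₀ + c x₀ y₀ + φ x₀ ≤ φ x := by
  obtain ⟨ψ, -, hψtop, hsup⟩ := hφ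
  -- upper bound: each c-affine function is ≤ φ on X
  have hub : ∀ y ∈ Y, ∀ r : ℝ, ψ y = (r : EReal) → ∀ x ∈ X, -c x y + r ≤ φ x := by
    intro y hy r hr x hx
    have h1 : (((-c x y : ℝ) : EReal) + ψ y) ≤ ⨆ y ∈ Y, (((-c x y : ℝ) : EReal) + ψ y) :=
      le_iSup₂ (f := fun y (_ : y ∈ Y) => (((-c x y : ℝ) : EReal) + ψ y)) y hy
    rw [← hsup x hx, hr, ← EReal.coe_add] at h1
    exact_mod_cast h1
  -- approximate maximizers
  have key : ∀ k : ℕ, ∃ y ∈ Y, ∀ x ∈ X,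
      -c x y + c x₀ y + φ x₀ - 1 / ((k : ℝ) + 1) ≤ φ x := by
    intro k
    have hε : (0 : ℝ) < 1 / ((k : ℝ) + 1) := by positivity
    have hlt : ((φ x₀ - 1 / ((k : ℝ) + 1) : ℝ) : EReal)
        < ⨆ y ∈ Y, (((-c x₀ y : ℝ) : EReal) + ψ y) := by
      rw [← hsup x₀ hx₀]
      exact_mod_cast (by linarith : φ x₀ - 1 / ((k : ℝ) + 1) < φ x₀)
    obtain ⟨y, hy⟩ := lt_iSup_iff.mp hlt
    have hyY : y ∈ Y := by
      by_contra hyY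
      simp [hyY] at hy
    rw [iSup_pos hyY] at hy
    have hbot : ψ y ≠ ⊥ := by
      intro h
      rw [h] at hy
      simp at hy
    set r := (ψ y).toReal with hrdef
    have hr : ψ y = (r : EReal) := (EReal.coe_toReal (hψtop y) hbot).symm
    rw [hr, ← EReal.coe_add] at hy
    have hy' : φ x₀ - 1 / ((k : ℝ) + 1) < -c x₀ y + r := by exact_mod_cast hy
    refine ⟨y, hyY, fun x hx => ?_⟩
    have := hub y hyY r hr x hx
    linarith
  choose ys hysY hys using key
  obtain ⟨y₀, hy₀Y, σ, hσ, htend⟩ := hY.tendsto_subseq hysY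
  refine ⟨y₀, hy₀Y, fun x hx => ?_⟩
  have htendY : Filter.Tendsto (fun j => ys (σ j)) Filter.atTop (nhdsWithin y₀ Y) :=
    tendsto_nhdsWithin_iff.mpr ⟨htend, Filter.Eventually.of_forall fun j => hysY _⟩
  have hcy : ∀ z ∈ X, Filter.Tendsto (fun j => c z (ys (σ j))) Filter.atTop (nhds (c z y₀)) := by
    intro z hz
    have hcz : ContinuousOn (fun y => c z y) Y := by
      have : ContinuousOn (fun y : Ept n => (z, y)) Y :=
        (Continuous.prodMk_right z).continuousOn
      exact hc.comp this fun y hy => ⟨hz, hy⟩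
    exact ((hcz y₀ hy₀Y).tendsto).comp htendY
  have hεtend : Filter.Tendsto (fun j => 1 / ((σ j : ℝ) + 1)) Filter.atTop (nhds 0) :=
    tendsto_one_div_add_atTop_nhds_zero_nat.comp hσ.tendsto_atTop
  have hlim : Filter.Tendsto
      (fun j => -c x (ys (σ j)) + c x₀ (ys (σ j)) + φ x₀ - 1 / ((σ j : ℝ) + 1))
      Filter.atTop (nhds (-c x y₀ + c x₀ y₀ + φ x₀ - 0)) :=
    ((((hcy x hx).neg.add (hcy x₀ hx₀)).add tendsto_const_nhds).sub hεtend)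
  rw [sub_zero] at hlim
  exact le_of_tendsto hlim (Filter.Eventually.of_forall fun j => hys (σ j) x hx)
end
end

section
/- For points X_i = (x_i, u_i) ∈ X × ℝ (i = 0,1), the c-chord satisfies F_{X₀X₁}(x) = sup of the union over i = 0,1 of the sets { -c(x,y) + c(x_i,y) + u_i : y ∈ Y, -c(x_{1-i},y) + c(x_i,y) + u_i ≤ u_{1-i} }. That is, the supremum defining the c-chord may be restricted to c-affine functions passing through one of the endpoints. -/
open Set Function

noncomputable section

/-- the supremum defining the `c`-chord may be restricted to `c`-affine
functions passing through one of the endpoints. -/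
theorem stmt_5 {n : ℕ} (X Y : Set (Ept n)) (c : Ept n → Ept n → ℝ)
    (hX : IsCompact X) (hY : IsCompact Y)
    (hc : ContinuousOn (Function.uncurry c) (X ×ˢ Y))
    (x₀ : Ept n) (hx₀ : x₀ ∈ X) (x₁ : Ept n) (hx₁ : x₁ ∈ X) (u₀ u₁ : ℝ)
    (x : Ept n) (hx : x ∈ X) :
    cChord Y c x₀ x₁ u₀ u₁ x =
      sSup ({v : ℝ | ∃ y ∈ Y, -c x₁ y + c x₀ y + u₀ ≤ u₁ ∧ v = -c x y + c x₀ y + u₀} ∪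
            {v : ℝ | ∃ y ∈ Y, -c x₀ y + c x₁ y + u₁ ≤ u₀ ∧ v = -c x y + c x₁ y + u₁}) := by

  classical
  set S : Set ℝ := {v : ℝ | ∃ y ∈ Y, ∃ h : ℝ, -c x₀ y + h ≤ u₀ ∧ -c x₁ y + h ≤ u₁ ∧ v = -c x y + h}
    with hS
  set T : Set ℝ := ({v : ℝ | ∃ y ∈ Y, -c x₁ y + c x₀ y + u₀ ≤ u₁ ∧ v = -c x y + c x₀ y + u₀} ∪
            {v : ℝ | ∃ y ∈ Y, -c x₀ y + c x₁ y + u₁ ≤ u₀ ∧ v = -c x y + c x₁ y + u₁}) with hT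
  show sSup S = sSup T
  -- T ⊆ S
  have hTS : T ⊆ S := by
    rintro v (⟨y, hy, hle, rfl⟩ | ⟨y, hy, hle, rfl⟩)
    · exact ⟨y, hy, c x₀ y + u₀, by linarith, by linarith, by ring⟩
    · exact ⟨y, hy, c x₁ y + u₁, by linarith, by linarith, by ring⟩
  -- every element of S is dominated by an element of T
  have hdom : ∀ v ∈ S, ∃ w ∈ T, v ≤ w := by
    rintro v ⟨y, hy, h, h0, h1, rfl⟩
    rcases le_total (c x₀ y + u₀) (c x₁ y + u₁) with hle | hle
    · exact ⟨-c x y + c x₀ y + u₀, Or.inl ⟨y, hy, by linarith, rfl⟩, by linarith⟩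
    · exact ⟨-c x y + c x₁ y + u₁, Or.inr ⟨y, hy, by linarith, rfl⟩, by linarith⟩
  rcases Y.eq_empty_or_nonempty with hYe | ⟨y, hy⟩
  · have hSe : S = ∅ := by
      ext v; simp only [hS, Set.mem_setOf_eq, Set.mem_empty_iff_false, iff_false]
      rintro ⟨y, hy, _⟩; exact absurd hy (by simp [hYe])
    have hTe : T = ∅ := Set.subset_empty_iff.mp (hSe ▸ hTS)
    rw [hSe, hTe]
  -- continuity of y ↦ c x' y on Y for x' ∈ X
  have hcont : ∀ x' ∈ X, ContinuousOn (fun y => c x' y) Y := by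
    intro x' hx'
    exact hc.comp (Continuous.continuousOn (Continuous.prodMk_right x')) (fun y hy => ⟨hx', hy⟩)
  -- S is bounded above
  obtain ⟨C, hC⟩ := hY.exists_bound_of_continuousOn
    (((hcont x₀ hx₀).sub (hcont x hx)).add continuousOn_const)
  have hBdd : BddAbove S := by
    refine ⟨C, ?_⟩
    rintro v ⟨y', hy', h, h0, h1, rfl⟩
    have := hC y' hy'
    have h2 : c x₀ y' - c x y' + u₀ ≤ C := le_trans (le_abs_self _) this
    linarith
  have hTBdd : BddAbove T := hBdd.mono hTS
  -- nonemptiness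
  have hSne : S.Nonempty := by
    refine ⟨-c x y + min (c x₀ y + u₀) (c x₁ y + u₁), y, hy, min (c x₀ y + u₀) (c x₁ y + u₁),
      ?_, ?_, rfl⟩
    · have := min_le_left (c x₀ y + u₀) (c x₁ y + u₁); linarith
    · have := min_le_right (c x₀ y + u₀) (c x₁ y + u₁); linarith
  obtain ⟨v, hvS⟩ := hSne
  obtain ⟨w, hwT, _⟩ := hdom v hvS
  have hTne : T.Nonempty := ⟨w, hwT⟩
  apply le_antisymm
  · refine csSup_le ⟨v, hvS⟩ (fun a haS => ?_)
    obtain ⟨b, hbT, hab⟩ := hdom a haS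
    exact hab.trans (le_csSup hTBdd hbT)
  · exact csSup_le_csSup hBdd hTne hTS
end
end

section
/- Let X_i = (x_i, u_i) ∈ X × ℝ for i = 0,1, and set u_i' = F_{X₀X₁}(x_i) and X_i' = (x_i, u_i'). Then F_{X₀X₁} = F_{X₀'X₁'} as functions on X. -/
open Set Function

noncomputable section

/-- replacing the heights `uᵢ` by the values of the `c`-chord at the
endpoints does not change the `c`-chord. -/
theorem stmt_7 {n : ℕ} (X Y : Set (Ept n)) (c : Ept n → Ept n → ℝ)
    (hX : IsCompact X) (hY : IsCompact Y) (hYne : Y.Nonempty)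
    (hc : ContinuousOn (Function.uncurry c) (X ×ˢ Y))
    (x₀ : Ept n) (hx₀ : x₀ ∈ X) (x₁ : Ept n) (hx₁ : x₁ ∈ X) (u₀ u₁ : ℝ) :
    ∀ x ∈ X,
      cChord Y c x₀ x₁ (cChord Y c x₀ x₁ u₀ u₁ x₀) (cChord Y c x₀ x₁ u₀ u₁ x₁) x =
        cChord Y c x₀ x₁ u₀ u₁ x := by
  have hne : ∀ x' : Ept n,
      {v : ℝ | ∃ y ∈ Y, ∃ h : ℝ, -c x₀ y + h ≤ u₀ ∧ -c x₁ y + h ≤ u₁ ∧ v = -c x' y + h}.Nonempty := by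
    intro x'
    obtain ⟨y, hy⟩ := hYne
    refine ⟨-c x' y + min (u₀ + c x₀ y) (u₁ + c x₁ y), y, hy,
      min (u₀ + c x₀ y) (u₁ + c x₁ y), ?_, ?_, rfl⟩
    · have := min_le_left (u₀ + c x₀ y) (u₁ + c x₁ y); linarith
    · have := min_le_right (u₀ + c x₀ y) (u₁ + c x₁ y); linarith
  have hbdd : ∀ x' ∈ X, BddAbove
      {v : ℝ | ∃ y ∈ Y, ∃ h : ℝ, -c x₀ y + h ≤ u₀ ∧ -c x₁ y + h ≤ u₁ ∧ v = -c x' y + h} := by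
    intro x' hx'
    have hcont : ContinuousOn (fun y => c x₀ y - c x' y) Y := by
      have h0 : ContinuousOn (fun y => c x₀ y) Y :=
        hc.comp (Continuous.continuousOn (by fun_prop)) (fun y hy => Set.mk_mem_prod hx₀ hy)
      have h1 : ContinuousOn (fun y => c x' y) Y :=
        hc.comp (Continuous.continuousOn (by fun_prop)) (fun y hy => Set.mk_mem_prod hx' hy)
      exact h0.sub h1
    obtain ⟨M, hM⟩ := hY.bddAbove_image hcont
    refine ⟨u₀ + M, ?_⟩
    rintro v ⟨y, hy, h, h0, h1, rfl⟩
    have : c x₀ y - c x' y ≤ M := hM (Set.mem_image_of_mem _ hy)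
    linarith
  have hle : ∀ i : Fin 2, ∀ x' u', (∀ y ∈ Y, ∀ h : ℝ,
      -c x₀ y + h ≤ u₀ → -c x₁ y + h ≤ u₁ → -c x' y + h ≤ u') →
      cChord Y c x₀ x₁ u₀ u₁ x' ≤ u' := by
    intro _ x' u' hub
    exact csSup_le (hne x') (by rintro v ⟨y, hy, h, h0, h1, rfl⟩; exact hub y hy h h0 h1)
  have hle₀ : cChord Y c x₀ x₁ u₀ u₁ x₀ ≤ u₀ :=
    hle 0 x₀ u₀ (fun y hy h h0 h1 => h0)
  have hle₁ : cChord Y c x₀ x₁ u₀ u₁ x₁ ≤ u₁ :=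
    hle 1 x₁ u₁ (fun y hy h h0 h1 => h1)
  intro x hx
  have hset :
      {v : ℝ | ∃ y ∈ Y, ∃ h : ℝ, -c x₀ y + h ≤ cChord Y c x₀ x₁ u₀ u₁ x₀ ∧
          -c x₁ y + h ≤ cChord Y c x₀ x₁ u₀ u₁ x₁ ∧ v = -c x y + h}
        = {v : ℝ | ∃ y ∈ Y, ∃ h : ℝ, -c x₀ y + h ≤ u₀ ∧ -c x₁ y + h ≤ u₁ ∧ v = -c x y + h} := by
    ext v
    constructor
    · rintro ⟨y, hy, h, h0, h1, rfl⟩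
      exact ⟨y, hy, h, h0.trans hle₀, h1.trans hle₁, rfl⟩
    · rintro ⟨y, hy, h, h0, h1, rfl⟩
      refine ⟨y, hy, h, ?_, ?_, rfl⟩
      · exact le_csSup (hbdd x₀ hx₀) ⟨y, hy, h, h0, h1, rfl⟩
      · exact le_csSup (hbdd x₁ hx₁) ⟨y, hy, h, h0, h1, rfl⟩
  exact congrArg sSup hset
end
end

section
/- Let X_i = (x_i, u_i) ∈ X × ℝ for i = 0,1 and suppose the c-chord connects its endpoints: F_{X₀X₁}(x_i) = u_i for i = 0,1. Then there exist y ∈ Y and h ∈ ℝ with -c(x_i, y) + h = u_i for both i = 0,1; i.e. some c-affine function passes through both X₀ and X₁. -/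
open Set Function

noncomputable section

/-- Continuity of `y ↦ nDx c x y` for a `C²` cost. -/
lemma continuous_nDx {n : ℕ} (c : Ept n → Ept n → ℝ)
    (hc : ContDiff ℝ 2 (Function.uncurry c)) (x : Ept n) :
    Continuous (fun y => nDx c x y) := by
  have hfd : ∀ y, fderiv ℝ (fun x' => c x' y) x
      = (fderiv ℝ (uncurry c) (x, y)).comp (ContinuousLinearMap.inl ℝ (Ept n) (Ept n)) := by
    intro y
    have h1 : HasFDerivAt (fun x' : Ept n => (x', y))
        (ContinuousLinearMap.inl ℝ (Ept n) (Ept n)) x := hasFDerivAt_prodMk_left x y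
    have h2 : HasFDerivAt (uncurry c) (fderiv ℝ (uncurry c) (x, y)) (x, y) :=
      (hc.differentiable (by norm_num)).differentiableAt.hasFDerivAt
    exact (h2.comp x h1).fderiv
  have hcont : Continuous (fun y => fderiv ℝ (fun x' => c x' y) x) := by
    simp only [hfd]
    exact ((hc.continuous_fderiv (by norm_num)).comp
      (Continuous.prodMk_right x)).clm_comp continuous_const
  have hgrad : Continuous (fun y => gradient (fun x' => c x' y) x) := by
    simp only [gradient]
    exact (InnerProductSpace.toDual ℝ (Ept n)).symm.continuous.comp hcont
  exact hgrad.neg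

/-- A compact set with a continuous injection onto a convex set is preconnected. -/
lemma preconnected_of_convex_image {n : ℕ} (Y : Set (Ept n)) (f : Ept n → Ept n)
    (hY : IsCompact Y) (hf : Continuous f) (hinj : Set.InjOn f Y)
    (hconv : Convex ℝ (f '' Y)) : IsPreconnected Y := by
  rcases Y.eq_empty_or_nonempty with rfl | hne
  · exact isPreconnected_empty
  haveI : CompactSpace Y := isCompact_iff_compactSpace.mp hY
  set g : Y → Ept n := fun y => f y with hg
  have hginj : Function.Injective g := fun a b hab =>
    Subtype.ext (hinj a.2 b.2 hab)
  have hgc : Continuous g := hf.comp continuous_subtype_val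
  have hemb := hgc.isClosedEmbedding hginj
  have hrange : Set.range g = f '' Y := by
    ext v; simp [g, Subtype.exists]
  have hpre : IsPreconnected (Set.range g) := by
    rw [hrange]; exact hconv.isPreconnected
  let e := (hemb.isEmbedding.toHomeomorph)
  haveI : PreconnectedSpace (Set.range g) := isPreconnected_iff_preconnectedSpace.mp hpre
  haveI : PreconnectedSpace Y :=
    (e.symm.surjective.denseRange).preconnectedSpace e.symm.continuous
  exact isPreconnected_iff_preconnectedSpace.mpr ‹_›

/-- if the `c`-chord connects its endpoints, then some `c`-affine function
passes through both endpoints. -/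
theorem stmt_8 {n : ℕ} (X Y : Set (Ept n)) (c : Ept n → Ept n → ℝ)
    (hsetup : CostSetup X Y c)
    (x₀ : Ept n) (hx₀ : x₀ ∈ X) (x₁ : Ept n) (hx₁ : x₁ ∈ X) (u₀ u₁ : ℝ)
    (h₀ : cChord Y c x₀ x₁ u₀ u₁ x₀ = u₀) (h₁ : cChord Y c x₀ x₁ u₀ u₁ x₁ = u₁) :
    ∃ y ∈ Y, ∃ h : ℝ, -c x₀ y + h = u₀ ∧ -c x₁ y + h = u₁ := by
  -- basic continuity facts
  have hcc : Continuous (Function.uncurry c) := hsetup.smooth.continuous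
  have hc0 : Continuous (fun y => c x₀ y) := hcc.comp (Continuous.prodMk_right x₀)
  have hc1 : Continuous (fun y => c x₁ y) := hcc.comp (Continuous.prodMk_right x₁)
  set d : Ept n → ℝ := fun y => c x₁ y - c x₀ y with hd_def
  have hd : Continuous d := hc1.sub hc0
  have hYne : Y.Nonempty := hsetup.intY.mono interior_subset
  -- Y is preconnected
  have hconn : IsPreconnected Y := preconnected_of_convex_image Y (fun y => nDx c x₀ y)
    hsetup.compactY (continuous_nDx c hsetup.smooth x₀) (hsetup.twist x₀ hx₀)
    (hsetup.cConvY x₀ hx₀)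
  -- elements of the defining sets
  have hmem : ∀ y ∈ Y, ∀ x : Ept n,
      (-c x y + min (u₀ + c x₀ y) (u₁ + c x₁ y)) ∈
      {v : ℝ | ∃ y ∈ Y, ∃ h : ℝ, -c x₀ y + h ≤ u₀ ∧ -c x₁ y + h ≤ u₁ ∧ v = -c x y + h} := by
    intro y hy x
    exact ⟨y, hy, min (u₀ + c x₀ y) (u₁ + c x₁ y),
      by have := min_le_left (u₀ + c x₀ y) (u₁ + c x₁ y); linarith,
      by have := min_le_right (u₀ + c x₀ y) (u₁ + c x₁ y); linarith, rfl⟩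
  obtain ⟨yw, hyw⟩ := hYne
  -- a point where d is large
  obtain ⟨ya, hya, hmax⟩ := hsetup.compactY.exists_isMaxOn ⟨yw, hyw⟩ hd.continuousOn
  have h_da : u₀ - u₁ ≤ d ya := by
    by_contra hlt
    push_neg at hlt
    have hub : cChord Y c x₀ x₁ u₀ u₁ x₀ ≤ u₁ + d ya := by
      apply csSup_le ⟨_, hmem yw hyw x₀⟩
      rintro v ⟨y, hy, h, hle0, hle1, rfl⟩
      have := hmax hy
      simp only [hd_def, Set.mem_setOf_eq] at this ⊢
      linarith
    rw [h₀] at hub; linarith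
  -- a point where d is small
  obtain ⟨yb, hyb, hmin⟩ := hsetup.compactY.exists_isMinOn ⟨yw, hyw⟩ hd.continuousOn
  have h_db : d yb ≤ u₀ - u₁ := by
    by_contra hlt
    push_neg at hlt
    have hub : cChord Y c x₀ x₁ u₀ u₁ x₁ ≤ u₀ - d yb := by
      apply csSup_le ⟨_, hmem yw hyw x₁⟩
      rintro v ⟨y, hy, h, hle0, hle1, rfl⟩
      have := hmin hy
      simp only [hd_def, Set.mem_setOf_eq] at this ⊢
      linarith
    rw [h₁] at hub; linarith
  -- intermediate value theorem
  have hIcc : (u₀ - u₁) ∈ Icc (d yb) (d ya) := ⟨h_db, h_da⟩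
  obtain ⟨y, hy, hdy⟩ := hconn.intermediate_value hyb hya hd.continuousOn hIcc
  refine ⟨y, hy, u₀ + c x₀ y, by ring, ?_⟩
  simp only [hd_def] at hdy
  linarith
end
end

section
/- Suppose c satisfies Loeper's property. Let X_i = (x_i, u_i) ∈ X × ℝ and suppose y ∈ Y, h ∈ ℝ satisfy -c(x_i,y) + h = u_i for i = 0,1. Then for every point x_t on the c-segment with respect to y from x₀ to x₁, the c-chord satisfies F_{X₀X₁}(x_t) = -c(x_t, y) + h. -/
open Set Function

noncomputable section

/-- under Loeper's property, the `c`-chord agrees with a connecting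
`c`-affine function along the corresponding `c`-segment. -/
theorem stmt_9 {n : ℕ} (X Y : Set (Ept n)) (c : Ept n → Ept n → ℝ)
    (hsetup : CostSetup X Y c) (hLoeper : Loeper X Y c)
    (x₀ : Ept n) (hx₀ : x₀ ∈ X) (x₁ : Ept n) (hx₁ : x₁ ∈ X) (u₀ u₁ : ℝ)
    (y : Ept n) (hy : y ∈ Y) (h : ℝ)
    (hy₀ : -c x₀ y + h = u₀) (hy₁ : -c x₁ y + h = u₁) :
    ∀ xt ∈ X, ∀ t ∈ Icc (0:ℝ) 1,
      nDy c xt y = t • nDy c x₁ y + (1 - t) • nDy c x₀ y →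
      cChord Y c x₀ x₁ u₀ u₁ xt = -c xt y + h := by
  intro xt hxt t ht hseg
  have hub : ∀ v ∈ {v : ℝ | ∃ y' ∈ Y, ∃ h' : ℝ,
      -c x₀ y' + h' ≤ u₀ ∧ -c x₁ y' + h' ≤ u₁ ∧ v = -c xt y' + h'},
      v ≤ -c xt y + h := by
    intro v hv
    obtain ⟨y', hy', h', h0, h1, hv⟩ := hv
    have hL := hLoeper x₀ hx₀ x₁ hx₁ y hy y' hy' xt hxt t ht hseg
    have hm : max (-c x₀ y' + c x₀ y) (-c x₁ y' + c x₁ y) ≤ h - h' := by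
      apply max_le <;> nlinarith
    nlinarith
  have hmem : -c xt y + h ∈ {v : ℝ | ∃ y' ∈ Y, ∃ h' : ℝ,
      -c x₀ y' + h' ≤ u₀ ∧ -c x₁ y' + h' ≤ u₁ ∧ v = -c xt y' + h'} :=
    ⟨y, hy, h, hy₀.le, hy₁.le, rfl⟩
  exact le_antisymm (csSup_le ⟨_, hmem⟩ hub)
    (le_csSup ⟨_, hub⟩ hmem)
end
end

section
/- Suppose that for every X_i = (x_i,u_i) ∈ X × ℝ (i = 0,1) and every y ∈ Y, h ∈ ℝ with -c(x_i,y) + h = u_i for both i, the c-chord satisfies F_{X₀X₁}(x_t) = -c(x_t,y) + h for all x_t on the c-segment with respect to y from x₀ to x₁. Then c satisfies Loeper's property. -/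
open Set Function

noncomputable section

/-- if the `c`-chord always agrees with connecting `c`-affine functions
along `c`-segments, then `c` satisfies Loeper's property. -/
theorem stmt_10 {n : ℕ} (X Y : Set (Ept n)) (c : Ept n → Ept n → ℝ)
    (hsetup : CostSetup X Y c)
    (H : ∀ x₀ ∈ X, ∀ x₁ ∈ X, ∀ u₀ u₁ : ℝ, ∀ y ∈ Y, ∀ h : ℝ,
      -c x₀ y + h = u₀ → -c x₁ y + h = u₁ →
      ∀ xt ∈ X, ∀ t ∈ Icc (0:ℝ) 1,
        nDy c xt y = t • nDy c x₁ y + (1 - t) • nDy c x₀ y →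
        cChord Y c x₀ x₁ u₀ u₁ xt = -c xt y + h) :
    Loeper X Y c := by
  intro x₀ hx₀ x₁ hx₁ y₀ hy₀ y hy xt hxt t ht hseg
  set M := max (-c x₀ y + c x₀ y₀) (-c x₁ y + c x₁ y₀) with hM
  have hchord := H x₀ hx₀ x₁ hx₁ (-c x₀ y₀) (-c x₁ y₀) y₀ hy₀ 0 (by ring) (by ring)
    xt hxt t ht hseg
  have hc : Continuous (Function.uncurry c) := hsetup.smooth.continuous
  have hcont : Continuous fun y' => c x₀ y' - c xt y' :=
    (hc.comp (Continuous.prodMk_right x₀)).sub (hc.comp (Continuous.prodMk_right xt))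
  obtain ⟨B, hB⟩ := hsetup.compactY.bddAbove_image hcont.continuousOn
  have hBdd : BddAbove {v : ℝ | ∃ y' ∈ Y, ∃ h : ℝ,
      -c x₀ y' + h ≤ -c x₀ y₀ ∧ -c x₁ y' + h ≤ -c x₁ y₀ ∧ v = -c xt y' + h} := by
    refine ⟨B + (-c x₀ y₀), ?_⟩
    rintro v ⟨y', hy', h, h0, h1, rfl⟩
    have hb : c x₀ y' - c xt y' ≤ B := hB (mem_image_of_mem _ hy')
    linarith
  have hmem : -c xt y + (-M) ∈ {v : ℝ | ∃ y' ∈ Y, ∃ h : ℝ,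
      -c x₀ y' + h ≤ -c x₀ y₀ ∧ -c x₁ y' + h ≤ -c x₁ y₀ ∧ v = -c xt y' + h} := by
    refine ⟨y, hy, -M, ?_, ?_, rfl⟩
    · have h0 : -c x₀ y + c x₀ y₀ ≤ M := le_max_left _ _
      linarith
    · have h1 : -c x₁ y + c x₁ y₀ ≤ M := le_max_right _ _
      linarith
  have hle := le_csSup hBdd hmem
  simp only [cChord] at hchord
  rw [hchord] at hle
  linarith
end
end

section
/- Suppose c does not satisfy Loeper's property, and that the interiors of X and Y are dense in X and Y respectively. Then there exist y₀, y₁ ∈ Int Y, x₀, x₁ ∈ Int X, h₁' ∈ ℝ and a point x_{t₀} on the c-segment with respect to y₀ strictly between x₀ and x₁ such that -c(x_i, y₁) + h₁' < -c(x_i, y₀) for i = 0,1, while -c(x_{t₀}, y₁) + h₁' > -c(x_{t₀}, y₀). -/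
open Set Function

noncomputable section

open Filter Topology

/-- Joint continuity of `nDy` for a `C²` cost. -/
lemma continuous_nDy_aux {n : ℕ} {c : Ept n → Ept n → ℝ} (h : ContDiff ℝ 2 (uncurry c)) :
    Continuous fun p : Ept n × Ept n => nDy c p.1 p.2 := by
  have hd : Differentiable ℝ (uncurry c) := h.differentiable (by norm_num)
  have key : ∀ p : Ept n × Ept n, fderiv ℝ (fun y' => c p.1 y') p.2 =
      (fderiv ℝ (uncurry c) p).comp (ContinuousLinearMap.inr ℝ (Ept n) (Ept n)) := by
    rintro ⟨x, y⟩
    have h1 : HasFDerivAt (uncurry c) (fderiv ℝ (uncurry c) (x, y)) (x, y) :=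
      (hd (x, y)).hasFDerivAt
    have h2 : HasFDerivAt (fun y' : Ept n => ((x, y') : Ept n × Ept n))
        (ContinuousLinearMap.inr ℝ (Ept n) (Ept n)) y := hasFDerivAt_prodMk_right x y
    exact (h1.comp y h2).fderiv
  have hcont : Continuous fun p : Ept n × Ept n =>
      (fderiv ℝ (uncurry c) p).comp (ContinuousLinearMap.inr ℝ (Ept n) (Ept n)) :=
    (((ContinuousLinearMap.compL ℝ (Ept n) (Ept n × Ept n) ℝ).flip
      (ContinuousLinearMap.inr ℝ (Ept n) (Ept n))).continuous).comp
      (h.continuous_fderiv (by norm_num))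
  have : Continuous fun p : Ept n × Ept n => gradient (fun y' => c p.1 y') p.2 := by
    simp only [gradient, key]
    exact (InnerProductSpace.toDual ℝ (Ept n)).symm.continuous.comp hcont
  exact this.neg

set_option maxHeartbeats 1000000 in
/-- if Loeper's property fails, it fails with interior points and with
strict inequalities at the endpoints. -/
theorem stmt_17 {n : ℕ} (X Y : Set (Ept n)) (c : Ept n → Ept n → ℝ)
    (hsetup : CostSetup X Y c)
    (hdX : X ⊆ closure (interior X)) (hdY : Y ⊆ closure (interior Y))
    (hnL : ¬ Loeper X Y c) :
    ∃ y₀ ∈ interior Y, ∃ y₁ ∈ interior Y, ∃ x₀ ∈ interior X, ∃ x₁ ∈ interior X,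
      ∃ h₁' : ℝ, ∃ xt ∈ X, ∃ t ∈ Ioo (0:ℝ) 1,
        nDy c xt y₀ = t • nDy c x₁ y₀ + (1 - t) • nDy c x₀ y₀ ∧
        -c x₀ y₁ + h₁' < -c x₀ y₀ ∧
        -c x₁ y₁ + h₁' < -c x₁ y₀ ∧
        -c xt y₁ + h₁' > -c xt y₀ := by
    classical
  have hc : Continuous (uncurry c) := hsetup.smooth.continuous
  have hcyy : Continuous fun p : Ept n × Ept n => nDy c p.1 p.2 :=
    continuous_nDy_aux hsetup.smooth
  unfold Loeper at hnL
  push_neg at hnL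
  obtain ⟨x₀, hx₀, x₁, hx₁, y₀, hy₀, y₁, hy₁, xt, hxt, t, ht, heq, hgt⟩ := hnL
  -- t is strictly between 0 and 1
  have ht0 : t ≠ 0 := by
    rintro rfl
    have hxe : nDy c xt y₀ = nDy c x₀ y₀ := by simpa using heq
    have hx : xt = x₀ := hsetup.twistStar y₀ hy₀ hxt hx₀ hxe
    rw [hx] at hgt
    exact lt_irrefl _ (lt_of_le_of_lt (le_max_left _ _) hgt)
  have ht1 : t ≠ 1 := by
    rintro rfl
    have hxe : nDy c xt y₀ = nDy c x₁ y₀ := by simpa using heq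
    have hx : xt = x₁ := hsetup.twistStar y₀ hy₀ hxt hx₁ hxe
    rw [hx] at hgt
    exact lt_irrefl _ (lt_of_le_of_lt (le_max_right _ _) hgt)
  have hIoo : t ∈ Ioo (0:ℝ) 1 :=
    ⟨lt_of_le_of_ne ht.1 (Ne.symm ht0), lt_of_le_of_ne ht.2 ht1⟩
  -- approximating sequences from the interiors
  obtain ⟨a, haI, haT⟩ := mem_closure_iff_seq_limit.1 (hdX hx₀)
  obtain ⟨b, hbI, hbT⟩ := mem_closure_iff_seq_limit.1 (hdX hx₁)
  obtain ⟨d, hdI, hdT⟩ := mem_closure_iff_seq_limit.1 (hdY hy₀)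
  obtain ⟨e, heI, heT⟩ := mem_closure_iff_seq_limit.1 (hdY hy₁)
  have haX : ∀ k, a k ∈ X := fun k => interior_subset (haI k)
  have hbX : ∀ k, b k ∈ X := fun k => interior_subset (hbI k)
  have hdY' : ∀ k, d k ∈ Y := fun k => interior_subset (hdI k)
  -- points on the approximate c-segments
  have hmem : ∀ k, ∃ x, x ∈ X ∧ nDy c x (d k) =
      t • nDy c (b k) (d k) + (1 - t) • nDy c (a k) (d k) := by
    intro k
    have := (hsetup.cConvX (d k) (hdY' k))
      (mem_image_of_mem _ (hbX k)) (mem_image_of_mem _ (haX k))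
      ht.1 (sub_nonneg.2 ht.2) (by ring)
    simpa [Set.mem_image] using this
  choose xts hxtsX hxtseq using hmem
  -- generic continuity helper
  have hcT : ∀ {u v : ℕ → Ept n} {x y : Ept n}, Tendsto u atTop (𝓝 x) →
      Tendsto v atTop (𝓝 y) → Tendsto (fun k => c (u k) (v k)) atTop (𝓝 (c x y)) :=
    fun hu hv => (hc.tendsto _).comp (hu.prodMk_nhds hv)
  have hNT : ∀ {u v : ℕ → Ept n} {x y : Ept n}, Tendsto u atTop (𝓝 x) →
      Tendsto v atTop (𝓝 y) →
      Tendsto (fun k => nDy c (u k) (v k)) atTop (𝓝 (nDy c x y)) :=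
    fun hu hv => (hcyy.tendsto _).comp (hu.prodMk_nhds hv)
  -- the segment points converge to xt
  have hp : Tendsto (fun k => nDy c (xts k) (d k)) atTop (𝓝 (nDy c xt y₀)) := by
    rw [heq]
    simp only [hxtseq]
    exact ((hNT hbT hdT).const_smul t).add ((hNT haT hdT).const_smul (1 - t))
  have hxts_lim : Tendsto xts atTop (𝓝 xt) := by
    apply tendsto_of_subseq_tendsto
    intro ns hns
    obtain ⟨x', hx'X, φ, hφ, hconv⟩ := hsetup.compactX.tendsto_subseq
      (fun j => hxtsX (ns j))
    refine ⟨φ, ?_⟩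
    have hnsφ : Tendsto (fun j => ns (φ j)) atTop atTop := hns.comp hφ.tendsto_atTop
    have h1 : Tendsto (fun j => nDy c (xts (ns (φ j))) (d (ns (φ j)))) atTop
        (𝓝 (nDy c x' y₀)) := hNT hconv (hdT.comp hnsφ)
    have h2 : Tendsto (fun j => nDy c (xts (ns (φ j))) (d (ns (φ j)))) atTop
        (𝓝 (nDy c xt y₀)) := hp.comp hnsφ
    have hxx : x' = xt := hsetup.twistStar y₀ hy₀ hx'X hxt (tendsto_nhds_unique h1 h2)
    rw [hxx] at hconv
    exact hconv
  -- value convergence and eventual strict inequality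
  have hV : Tendsto (fun k => -c (xts k) (e k) + c (xts k) (d k)) atTop
      (𝓝 (-c xt y₁ + c xt y₀)) := ((hcT hxts_lim heT).neg).add (hcT hxts_lim hdT)
  have hA : Tendsto (fun k => -c (a k) (e k) + c (a k) (d k)) atTop
      (𝓝 (-c x₀ y₁ + c x₀ y₀)) := ((hcT haT heT).neg).add (hcT haT hdT)
  have hB : Tendsto (fun k => -c (b k) (e k) + c (b k) (d k)) atTop
      (𝓝 (-c x₁ y₁ + c x₁ y₀)) := ((hcT hbT heT).neg).add (hcT hbT hdT)
  have hev : ∀ᶠ k in Filter.atTop,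
      max (-c (a k) (e k) + c (a k) (d k)) (-c (b k) (e k) + c (b k) (d k)) <
        -c (xts k) (e k) + c (xts k) (d k) := (hA.max hB).eventually_lt hV hgt
  obtain ⟨k, hk⟩ := hev.exists
  have h1 : -c (a k) (e k) + c (a k) (d k) < -c (xts k) (e k) + c (xts k) (d k) :=
    lt_of_le_of_lt (le_max_left _ _) hk
  have h2 : -c (b k) (e k) + c (b k) (d k) < -c (xts k) (e k) + c (xts k) (d k) :=
    lt_of_le_of_lt (le_max_right _ _) hk
  refine ⟨d k, hdI k, e k, heI k, a k, haI k, b k, hbI k,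
    (c (xts k) (e k) - c (xts k) (d k) +
      min (c (a k) (e k) - c (a k) (d k)) (c (b k) (e k) - c (b k) (d k))) / 2,
    xts k, hxtsX k, t, hIoo, hxtseq k, ?_, ?_, ?_⟩
  · have := min_le_left (c (a k) (e k) - c (a k) (d k)) (c (b k) (e k) - c (b k) (d k))
    linarith
  · have := min_le_right (c (a k) (e k) - c (a k) (d k)) (c (b k) (e k) - c (b k) (d k))
    linarith
  · have hmin : c (xts k) (e k) - c (xts k) (d k) <
        min (c (a k) (e k) - c (a k) (d k)) (c (b k) (e k) - c (b k) (d k)) :=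
      lt_min (by linarith) (by linarith)
    linarith
end
end
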